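/- Let φ: R → S be a homomorphism of Noetherian rings, M a finitely generated S-module viewed as an R-module via φ. The set of associated primes of M over R is finite. -/

import Mathlib

section Aux

variable {R M : Type*} [CommRing R] [AddCommGroup M] [Module R M]

theorem aux_assoc_subset_union [IsNoetherianRing R] (N : Submodule R M) :
    associatedPrimes R M ⊆ associatedPrimes R N ∪ associatedPrimes R (M ⧸ N) := by
  rintro p hp'
  obtain ⟨hp, x, hx⟩ := isAssociatedPrime_iff.mp hp'
  rw [Submodule.bot_colon'] at hx
  by_cases h : ∃ s : R, s • x ∈ N ∧ s • x ≠ 0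
  · obtain ⟨s, hsN, hs0⟩ := h
    left
    refine isAssociatedPrime_iff.mpr ⟨hp, ⟨s • x, hsN⟩, ?_⟩
    rw [Submodule.bot_colon']
    have hsp : s ∉ p := fun hsp => hs0
      ((Submodule.mem_annihilator_span_singleton _ _).mp (hx ▸ hsp))
    ext r
    rw [Submodule.mem_annihilator_span_singleton]
    constructor
    · intro hr
      have : r * s ∈ p := Ideal.mul_mem_right _ _ hr
      rw [hx, Submodule.mem_annihilator_span_singleton, mul_smul] at this
      exact Subtype.ext this
    · intro hr
      have h2 : (r * s) • x = 0 := by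
        rw [mul_smul]
        exact congrArg Subtype.val hr
      have : r * s ∈ p := hx ▸ (Submodule.mem_annihilator_span_singleton _ _).mpr h2
      exact (hp.mem_or_mem this).resolve_right hsp
  · right
    push_neg at h
    refine isAssociatedPrime_iff.mpr ⟨hp, Submodule.Quotient.mk x, ?_⟩
    rw [Submodule.bot_colon']
    ext r
    rw [Submodule.mem_annihilator_span_singleton, ← Submodule.Quotient.mk_smul,
      Submodule.Quotient.mk_eq_zero]
    constructor
    · intro hr
      have : r • x = 0 := (Submodule.mem_annihilator_span_singleton _ _).mp (hx ▸ hr)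
      rw [this]; exact N.zero_mem
    · intro hr
      have : r • x = 0 := h r hr
      exact hx ▸ (Submodule.mem_annihilator_span_singleton _ _).mpr this

end Aux

section Fin

variable (R M : Type*) [CommRing R] [AddCommGroup M] [Module R M]

theorem aux_assoc_span_singleton_subset [IsNoetherianRing R] {p : Ideal R} (hp : p.IsPrime)
    {x : M} (hx : p = (Submodule.span R {x}).annihilator) :
    associatedPrimes R (Submodule.span R {x}) ⊆ {p} := by
  have hker : LinearMap.ker (LinearMap.toSpanSingleton R M x) = p := by
    ext r
    rw [LinearMap.mem_ker, LinearMap.toSpanSingleton_apply, hx,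
      Submodule.mem_annihilator_span_singleton]
  have e : (R ⧸ p) ≃ₗ[R] Submodule.span R {x} :=
    (Submodule.quotEquivOfEq _ _ hker.symm) ≪≫ₗ
      ((LinearMap.toSpanSingleton R M x).quotKerEquivRange ≪≫ₗ
        LinearEquiv.ofEq _ _ (LinearMap.span_singleton_eq_range R M x).symm)
  rw [← LinearEquiv.AssociatedPrimes.eq e,
    associatedPrimes.eq_singleton_of_isPrimary hp.isPrimary, hp.radical]

theorem aux_assoc_finite [IsNoetherianRing R] [IsNoetherian R M] :
    (associatedPrimes R M).Finite := by
  have main : ∀ N : Submodule R M, (associatedPrimes R (M ⧸ N)).Finite := by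
    intro N
    induction N using IsNoetherian.induction with
    | hgt N IH =>
      by_cases hne : (associatedPrimes R (M ⧸ N)).Nonempty
      · obtain ⟨p, hp'⟩ := hne
        obtain ⟨hp, xbar, hx⟩ := isAssociatedPrime_iff.mp hp'
        rw [Submodule.bot_colon'] at hx
        obtain ⟨x, rfl⟩ := Submodule.Quotient.mk_surjective N xbar
        have hxN : x ∉ N := by
          intro hxN
          apply hp.ne_top
          rw [hx, Submodule.annihilator_eq_top_iff, Submodule.span_singleton_eq_bot,
            Submodule.Quotient.mk_eq_zero]
          exact hxN
        have hlt : N < N ⊔ Submodule.span R {x} := by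
          refine lt_of_le_of_ne le_sup_left fun h => hxN ?_
          rw [h]
          exact Submodule.mem_sup_right (Submodule.mem_span_singleton_self x)
        have hmap : (Submodule.span R {x}).map N.mkQ
            = Submodule.span R {Submodule.Quotient.mk (p := N) x} := by
          rw [Submodule.map_span, Set.image_singleton]; rfl
        have e := Submodule.quotientQuotientEquivQuotientSup N (Submodule.span R {x})
        have hsub := aux_assoc_subset_union (R := R) (M := M ⧸ N)
          ((Submodule.span R {x}).map N.mkQ)
        refine Set.Finite.subset (Set.Finite.union (Set.finite_singleton p)
          (IH _ hlt)) ?_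
        refine hsub.trans (Set.union_subset_union ?_ ?_)
        · rw [hmap]
          exact aux_assoc_span_singleton_subset R (M ⧸ N) hp hx
        · rw [LinearEquiv.AssociatedPrimes.eq e]
      · rw [Set.not_nonempty_iff_eq_empty] at hne
        rw [hne]; exact Set.finite_empty
  have e : M ≃ₗ[R] M ⧸ (⊥ : Submodule R M) := (Submodule.quotEquivOfEqBot _ rfl).symm
  rw [LinearEquiv.AssociatedPrimes.eq e]
  exact main ⊥

end Fin

section Comap

variable {R S M : Type*} [CommRing R] [CommRing S] [Algebra R S]
  [AddCommGroup M] [Module S M] [Module R M] [IsScalarTower R S M]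

theorem aux_exists_comap [IsNoetherianRing R] [IsNoetherianRing S] {p : Ideal R} (hp : IsAssociatedPrime p M) :
    ∃ q ∈ associatedPrimes S M, q.comap (algebraMap R S) = p := by
  obtain ⟨hpp, x, hx⟩ := isAssociatedPrime_iff.mp hp
  rw [Submodule.bot_colon'] at hx
  have hcomm : ∀ (r : R) (s : S) (m : M), r • s • m = s • r • m := fun r s m => by
    rw [← IsScalarTower.algebraMap_smul S r (s • m), ← IsScalarTower.algebraMap_smul S r m,
      smul_smul, smul_smul, mul_comm]
  have hxann : ∀ r : R, r • x = 0 ↔ r ∈ p := fun r => by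
    rw [hx, Submodule.mem_annihilator_span_singleton]
  have hx0 : x ≠ 0 := by
    rintro rfl
    apply hpp.ne_top
    rw [hx, Submodule.annihilator_eq_top_iff, Submodule.span_singleton_eq_bot]
  obtain ⟨J, ⟨y, hy0, hJ, hyann⟩, hmax⟩ :=
    set_has_maximal_iff_noetherian.mpr (inferInstance : IsNoetherian S S)
      { J : Ideal S | ∃ y : M, y ≠ 0 ∧ J = (S ∙ y).annihilator ∧ ∀ r : R, r • y = 0 ↔ r ∈ p }
      ⟨(S ∙ x).annihilator, x, hx0, rfl, hxann⟩
  have hJmem : ∀ s : S, s ∈ J ↔ s • y = 0 := fun s => by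
    rw [hJ, Submodule.mem_annihilator_span_singleton]
  -- key step
  have hstar : ∀ s : S, s • y ≠ 0 → ∀ r : R, (r • (s • y) = 0 ↔ r ∈ p) := by
    intro s hs r
    constructor
    · intro hrs
      by_contra hr
      have hz0 : r • y ≠ 0 := fun h => hr ((hyann r).mp h)
      have hzann : ∀ r' : R, r' • (r • y) = 0 ↔ r' ∈ p := by
        intro r'
        rw [← mul_smul, hyann]
        exact ⟨fun h => (hpp.mem_or_mem h).resolve_right hr,
          fun h => Ideal.mul_mem_right _ _ h⟩
      have hle : J ≤ (S ∙ (r • y)).annihilator := by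
        intro s' hs'
        rw [Submodule.mem_annihilator_span_singleton, ← hcomm, (hJmem s').mp hs', smul_zero]
      have heq : J = (S ∙ (r • y)).annihilator :=
        le_antisymm hle (by
          by_contra hlt
          exact hmax _ ⟨r • y, hz0, rfl, hzann⟩ (lt_of_le_of_ne hle (fun h => hlt h.ge)))
      have : s ∈ J := by
        rw [heq, Submodule.mem_annihilator_span_singleton, ← hcomm, hrs]
      exact hs ((hJmem s).mp this)
    · intro hr
      rw [hcomm, (hyann r).mpr hr, smul_zero]
  have hJprime : Ideal.IsPrime J := by
    constructor
    · intro h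
      apply hy0
      have : (1 : S) ∈ J := h ▸ Submodule.mem_top
      simpa using (hJmem 1).mp this
    · intro a b hab
      rw [or_iff_not_imp_right]
      intro hb
      have hb0 : b • y ≠ 0 := fun h => hb ((hJmem b).mpr h)
      have hab0 : a • (b • y) = 0 := by
        rw [← mul_smul]; exact (hJmem _).mp hab
      have hle : J ≤ (S ∙ (b • y)).annihilator := by
        intro s' hs'
        rw [Submodule.mem_annihilator_span_singleton, smul_comm, (hJmem s').mp hs', smul_zero]
      have hzann : ∀ r : R, r • (b • y) = 0 ↔ r ∈ p := hstar b hb0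
      have heq : J = (S ∙ (b • y)).annihilator :=
        le_antisymm hle (by
          by_contra hlt
          exact hmax _ ⟨b • y, hb0, rfl, hzann⟩ (lt_of_le_of_ne hle (fun h => hlt h.ge)))
      rw [heq, Submodule.mem_annihilator_span_singleton]
      exact hab0
  refine ⟨J, isAssociatedPrime_iff.mpr ⟨hJprime, y, by rw [hJ, Submodule.bot_colon']⟩, ?_⟩
  ext r
  rw [Ideal.mem_comap, hJmem, IsScalarTower.algebraMap_smul, hyann]

end Comap


/-- Let `φ : R → S` be a homomorphism of commutative Noetherian rings
(encoded by `Algebra R S`) and `M` a finitely generated `S`-module, viewed as an `R`-module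
via `φ`.  Then the set of associated primes of `M` over `R` is finite. -/
theorem associatedPrimes_finite_of_finite_over_target
    (R S M : Type*) [CommRing R] [CommRing S] [Algebra R S]
    [IsNoetherianRing R] [IsNoetherianRing S]
    [AddCommGroup M] [Module S M] [Module R M] [IsScalarTower R S M]
    [Module.Finite S M] :
    (associatedPrimes R M).Finite := by
  have : IsNoetherian S M := isNoetherian_of_isNoetherianRing_of_finite S M
  have hfin : (associatedPrimes S M).Finite := aux_assoc_finite S M
  refine (hfin.image (fun q => q.comap (algebraMap R S))).subset ?_
  intro p hp
  obtain ⟨q, hq, hq2⟩ := aux_exists_comap (S := S) (M := M) hp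
  exact ⟨q, hq, hq2⟩
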